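/- Let α > 2, δ = 2/α, and let B₁, B₂, F > 0. Define f : (0,F) → ℝ by f(x) = (2^{B₁/x} − 1)^δ + (2^{B₂/(F−x)} − 1)^δ, and h : (0,∞) → ℝ by h(t) = t²·2^t·(2^t − 1)^{δ−1}. Then there exists a unique x* ∈ (0,F) satisfying the equation (1/B₁)·h(B₁/x*) = (1/B₂)·h(B₂/(F−x*)), and this x* is the unique global minimizer of f on (0,F), i.e., f(x) > f(x*) for every x ∈ (0,F) with x ≠ x*. -/

import Mathlib

open Real


noncomputable def Hfun (δ : ℝ) : ℝ → ℝ :=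
  fun t => t ^ 2 * (2 : ℝ) ^ t * ((2 : ℝ) ^ t - 1) ^ (δ - 1)

lemma two_rpow_pos (t : ℝ) : (0:ℝ) < (2:ℝ) ^ t := rpow_pos_of_pos two_pos t

lemma two_rpow_sub_one_pos {t : ℝ} (ht : 0 < t) : (0:ℝ) < (2:ℝ) ^ t - 1 := by
  have : (1:ℝ) < (2:ℝ) ^ t := by
    rw [show (1:ℝ) = (2:ℝ) ^ (0:ℝ) by simp]
    exact Real.rpow_lt_rpow_left_iff one_lt_two |>.mpr ht
  linarith

lemma Hfun_hasDerivAt (δ : ℝ) {t : ℝ} (ht : 0 < t) :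
    HasDerivAt (Hfun δ)
      (t * (2:ℝ) ^ t * ((2:ℝ) ^ t - 1) ^ (δ - 2) *
        (2 * ((2:ℝ) ^ t - 1) + t * Real.log 2 * (δ * (2:ℝ) ^ t - 1))) t := by
  have hu : (0:ℝ) < (2:ℝ) ^ t - 1 := two_rpow_sub_one_pos ht
  have ha : HasDerivAt (fun s : ℝ => s ^ 2) (2 * t) t := by
    simpa using hasDerivAt_pow 2 t
  have hb : HasDerivAt (fun s : ℝ => (2:ℝ) ^ s) ((2:ℝ) ^ t * Real.log 2) t :=
    (Real.hasStrictDerivAt_const_rpow two_pos t).hasDerivAt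
  have hc : HasDerivAt (fun s : ℝ => (2:ℝ) ^ s - 1) ((2:ℝ) ^ t * Real.log 2) t :=
    hb.sub_const 1
  have hd : HasDerivAt (fun s : ℝ => ((2:ℝ) ^ s - 1) ^ (δ - 1))
      ((2:ℝ) ^ t * Real.log 2 * (δ - 1) * ((2:ℝ) ^ t - 1) ^ (δ - 1 - 1)) t :=
    hc.rpow_const (Or.inl hu.ne')
  have h := (ha.mul hb).mul hd
  refine h.congr_deriv ?_; symm
  have key : ((2:ℝ) ^ t - 1) ^ (δ - 1) = ((2:ℝ) ^ t - 1) ^ (δ - 2) * ((2:ℝ) ^ t - 1) := by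
    rw [← Real.rpow_add_one hu.ne' (δ - 2)]; ring_nf
  rw [show δ - 1 - 1 = δ - 2 by ring, key, Pi.mul_apply]
  ring

lemma Hfun_deriv_pos {δ t : ℝ} (hδ0 : 0 < δ) (ht : 0 < t) :
    0 < t * (2:ℝ) ^ t * ((2:ℝ) ^ t - 1) ^ (δ - 2) *
        (2 * ((2:ℝ) ^ t - 1) + t * Real.log 2 * (δ * (2:ℝ) ^ t - 1)) := by
  have hu : (0:ℝ) < (2:ℝ) ^ t - 1 := two_rpow_sub_one_pos ht
  have h2 : (0:ℝ) < (2:ℝ) ^ t := two_rpow_pos t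
  have hl2 : (0:ℝ) < Real.log 2 := Real.log_pos one_lt_two
  have hkey : t * Real.log 2 ≤ (2:ℝ) ^ t - 1 := by
    have := Real.add_one_le_exp (t * Real.log 2)
    rw [Real.rpow_def_of_pos two_pos]
    rw [mul_comm t (Real.log 2)] at this
    linarith
  have htl : 0 < t * Real.log 2 := mul_pos ht hl2
  have hbr : 0 < 2 * ((2:ℝ) ^ t - 1) + t * Real.log 2 * (δ * (2:ℝ) ^ t - 1) := by
    nlinarith [mul_pos htl (mul_pos hδ0 h2)]
  exact mul_pos (mul_pos (mul_pos ht h2) (rpow_pos_of_pos hu _)) hbr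

lemma Hfun_strictMonoOn {δ : ℝ} (hδ0 : 0 < δ) : StrictMonoOn (Hfun δ) (Set.Ioi 0) := by
  apply strictMonoOn_of_deriv_pos (convex_Ioi 0)
  · exact fun t ht => (Hfun_hasDerivAt δ ht).continuousAt.continuousWithinAt
  · rw [interior_Ioi]
    intro t ht
    rw [(Hfun_hasDerivAt δ ht).deriv]
    exact Hfun_deriv_pos hδ0 ht

lemma Hfun_pos {δ t : ℝ} (ht : 0 < t) : 0 < Hfun δ t :=
  mul_pos (mul_pos (pow_pos ht 2) (two_rpow_pos t)) (rpow_pos_of_pos (two_rpow_sub_one_pos ht) _)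

lemma Hfun_lower {δ t : ℝ} (hδ0 : 0 < δ) (hδ1 : δ < 1) (ht : 0 < t) : t ^ 2 ≤ Hfun δ t := by
  have hu : (0:ℝ) < (2:ℝ) ^ t - 1 := two_rpow_sub_one_pos ht
  have h2 : (0:ℝ) < (2:ℝ) ^ t := two_rpow_pos t
  have h1 : ((2:ℝ) ^ t) ^ (δ - 1) ≤ ((2:ℝ) ^ t - 1) ^ (δ - 1) :=
    Real.rpow_le_rpow_of_nonpos hu (by linarith) (by linarith)
  have h2' : (2:ℝ) ^ t * ((2:ℝ) ^ t) ^ (δ - 1) = ((2:ℝ) ^ t) ^ δ := by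
    rw [show δ = δ - 1 + 1 by ring, Real.rpow_add_one h2.ne']; ring
  have h3 : (1:ℝ) ≤ ((2:ℝ) ^ t) ^ δ :=
    Real.one_le_rpow (by linarith) hδ0.le
  calc t ^ 2 = t ^ 2 * 1 := by ring
    _ ≤ t ^ 2 * (((2:ℝ) ^ t) ^ δ) := by
        exact mul_le_mul_of_nonneg_left h3 (by positivity)
    _ = t ^ 2 * ((2:ℝ) ^ t * ((2:ℝ) ^ t) ^ (δ - 1)) := by rw [h2']
    _ ≤ t ^ 2 * ((2:ℝ) ^ t * ((2:ℝ) ^ t - 1) ^ (δ - 1)) := by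
        apply mul_le_mul_of_nonneg_left _ (by positivity)
        exact mul_le_mul_of_nonneg_left h1 h2.le
    _ = Hfun δ t := by rw [Hfun]; ring

theorem main_aux (δ B₁ B₂ F : ℝ) (hδ0 : 0 < δ) (hδ1 : δ < 1)
    (hB₁ : 0 < B₁) (hB₂ : 0 < B₂) (hF : 0 < F) :
    ∃ x ∈ Set.Ioo (0 : ℝ) F,
      ((1 / B₁) * Hfun δ (B₁ / x) = (1 / B₂) * Hfun δ (B₂ / (F - x))) ∧
      (∀ y ∈ Set.Ioo (0 : ℝ) F,
        (1 / B₁) * Hfun δ (B₁ / y) = (1 / B₂) * Hfun δ (B₂ / (F - y)) → y = x) ∧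
      (∀ y ∈ Set.Ioo (0 : ℝ) F, y ≠ x →
        ((2:ℝ) ^ (B₁ / x) - 1) ^ δ + ((2:ℝ) ^ (B₂ / (F - x)) - 1) ^ δ <
          ((2:ℝ) ^ (B₁ / y) - 1) ^ δ + ((2:ℝ) ^ (B₂ / (F - y)) - 1) ^ δ) := by
  set L : ℝ → ℝ := fun x => (1 / B₁) * Hfun δ (B₁ / x) with hLdef
  set R : ℝ → ℝ := fun x => (1 / B₂) * Hfun δ (B₂ / (F - x)) with hRdef
  -- strict monotonicity of L (anti) and R (mono)
  have hLanti : ∀ x ∈ Set.Ioo (0:ℝ) F, ∀ y ∈ Set.Ioo (0:ℝ) F, x < y → L y < L x := by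
    intro x hx y hy hxy
    have h1 : B₁ / y < B₁ / x := div_lt_div_of_pos_left hB₁ hx.1 hxy
    have h2 := Hfun_strictMonoOn hδ0 (Set.mem_Ioi.mpr (div_pos hB₁ hy.1))
      (Set.mem_Ioi.mpr (div_pos hB₁ hx.1)) h1
    exact mul_lt_mul_of_pos_left h2 (by positivity)
  have hRmono : ∀ x ∈ Set.Ioo (0:ℝ) F, ∀ y ∈ Set.Ioo (0:ℝ) F, x < y → R x < R y := by
    intro x hx y hy hxy
    have hFy : 0 < F - y := sub_pos.mpr hy.2
    have hFx : 0 < F - x := sub_pos.mpr hx.2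
    have h1 : B₂ / (F - x) < B₂ / (F - y) :=
      div_lt_div_of_pos_left hB₂ hFy (by linarith)
    have h2 := Hfun_strictMonoOn hδ0 (Set.mem_Ioi.mpr (div_pos hB₂ hFx))
      (Set.mem_Ioi.mpr (div_pos hB₂ hFy)) h1
    exact mul_lt_mul_of_pos_left h2 (by positivity)
  -- continuity
  have hLcont : ∀ x ∈ Set.Ioo (0:ℝ) F, ContinuousAt L x := by
    intro x hx
    have h1 : ContinuousAt (fun x : ℝ => B₁ / x) x :=
      continuousAt_const.div continuousAt_id hx.1.ne'
    have h2 : ContinuousAt (fun x : ℝ => Hfun δ (B₁ / x)) x :=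
      ContinuousAt.comp ((Hfun_hasDerivAt δ (div_pos hB₁ hx.1)).continuousAt) h1
    exact continuousAt_const.mul h2
  have hRcont : ∀ x ∈ Set.Ioo (0:ℝ) F, ContinuousAt R x := by
    intro x hx
    have hFx : (0:ℝ) < F - x := sub_pos.mpr hx.2
    have h1 : ContinuousAt (fun x : ℝ => B₂ / (F - x)) x :=
      continuousAt_const.div (continuousAt_const.sub continuousAt_id) hFx.ne'
    have h2 : ContinuousAt (fun x : ℝ => Hfun δ (B₂ / (F - x))) x :=
      ContinuousAt.comp (f := fun x : ℝ => B₂ / (F - x)) (x := x)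
        ((Hfun_hasDerivAt δ (div_pos hB₂ hFx)).continuousAt) h1
    exact continuousAt_const.mul h2
  -- lower bounds
  have hLlow : ∀ x : ℝ, 0 < x → B₁ / x ^ 2 ≤ L x := by
    intro x hx
    have h := Hfun_lower (δ := δ) (t := B₁ / x) hδ0 hδ1 (by positivity)
    have h2 : (1 / B₁) * (B₁ / x) ^ 2 ≤ L x := mul_le_mul_of_nonneg_left h (by positivity)
    have h3 : (1 / B₁) * (B₁ / x) ^ 2 = B₁ / x ^ 2 := by
      field_simp
    linarith [h3 ▸ h2]
  have hRlow : ∀ x : ℝ, x < F → B₂ / (F - x) ^ 2 ≤ R x := by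
    intro x hx
    have hFx : (0:ℝ) < F - x := sub_pos.mpr hx
    have h := Hfun_lower (δ := δ) (t := B₂ / (F - x)) hδ0 hδ1 (by positivity)
    have h2 : (1 / B₂) * (B₂ / (F - x)) ^ 2 ≤ R x := mul_le_mul_of_nonneg_left h (by positivity)
    have h3 : (1 / B₂) * (B₂ / (F - x)) ^ 2 = B₂ / (F - x) ^ 2 := by
      field_simp
    linarith [h3 ▸ h2]
  -- the endpoints a, b
  have hhalf : F / 2 ∈ Set.Ioo (0:ℝ) F := ⟨by linarith, by linarith⟩
  set C := R (F / 2) with hCdef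
  set D := L (F / 2) with hDdef
  set a := min (F / 4) (Real.sqrt (B₁ / (|C| + 1))) with hadef
  set m := min (F / 4) (Real.sqrt (B₂ / (|D| + 1))) with hmdef
  set b := F - m with hbdef
  have hapos : 0 < a := lt_min (by linarith) (Real.sqrt_pos.mpr (by positivity))
  have hmpos : 0 < m := lt_min (by linarith) (Real.sqrt_pos.mpr (by positivity))
  have haF : a < F / 2 := lt_of_le_of_lt (min_le_left _ _) (by linarith)
  have hbF : b < F := by simp only [hbdef]; linarith
  have hbhalf : F / 2 < b := by
    have : m ≤ F / 4 := min_le_left _ _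
    simp only [hbdef]; linarith
  have haIoo : a ∈ Set.Ioo (0:ℝ) F := ⟨hapos, by linarith⟩
  have hbIoo : b ∈ Set.Ioo (0:ℝ) F := ⟨by linarith, hbF⟩
  -- φ a > 0
  have hφa : 0 < L a - R a := by
    have hsq : a ^ 2 ≤ B₁ / (|C| + 1) := by
      have h := min_le_right (F / 4) (Real.sqrt (B₁ / (|C| + 1)))
      calc a ^ 2 ≤ (Real.sqrt (B₁ / (|C| + 1))) ^ 2 := by
            exact pow_le_pow_left₀ hapos.le h 2
        _ = B₁ / (|C| + 1) := Real.sq_sqrt (by positivity)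
    have h1 : |C| + 1 ≤ B₁ / a ^ 2 := by
      rw [le_div_iff₀ (by positivity : (0:ℝ) < a ^ 2)]
      rw [le_div_iff₀ (by positivity : (0:ℝ) < |C| + 1)] at hsq
      linarith
    have h2 : R a < C := hRmono a haIoo (F / 2) hhalf haF
    have h3 : C ≤ |C| := le_abs_self C
    have h4 := hLlow a hapos
    linarith
  -- φ b < 0
  have hφb : L b - R b < 0 := by
    have hFb : F - b = m := by simp [hbdef]
    have hsq : m ^ 2 ≤ B₂ / (|D| + 1) := by
      have h := min_le_right (F / 4) (Real.sqrt (B₂ / (|D| + 1)))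
      calc m ^ 2 ≤ (Real.sqrt (B₂ / (|D| + 1))) ^ 2 := by
            exact pow_le_pow_left₀ hmpos.le h 2
        _ = B₂ / (|D| + 1) := Real.sq_sqrt (by positivity)
    have h1 : |D| + 1 ≤ B₂ / m ^ 2 := by
      rw [le_div_iff₀ (by positivity : (0:ℝ) < m ^ 2)]
      rw [le_div_iff₀ (by positivity : (0:ℝ) < |D| + 1)] at hsq
      linarith
    have h2 : L b < D := hLanti (F / 2) hhalf b hbIoo hbhalf
    have h3 : D ≤ |D| := le_abs_self D
    have h4 := hRlow b hbF
    rw [hFb] at h4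
    linarith
  -- IVT
  have hab : a ≤ b := by linarith
  have hcont : ContinuousOn (fun x => L x - R x) (Set.Icc a b) := by
    intro z hz
    have hzI : z ∈ Set.Ioo (0:ℝ) F := ⟨lt_of_lt_of_le hapos hz.1, lt_of_le_of_lt hz.2 hbF⟩
    exact ((hLcont z hzI).sub (hRcont z hzI)).continuousWithinAt
  have h0mem : (0:ℝ) ∈ Set.Icc (L b - R b) (L a - R a) := ⟨hφb.le, hφa.le⟩
  obtain ⟨x, hxmem, hx0⟩ := intermediate_value_Icc' hab hcont h0mem
  have hxIoo : x ∈ Set.Ioo (0:ℝ) F :=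
    ⟨lt_of_lt_of_le hapos hxmem.1, lt_of_le_of_lt hxmem.2 hbF⟩
  have hxeq : L x = R x := sub_eq_zero.mp hx0
  -- uniqueness
  have huniq : ∀ y ∈ Set.Ioo (0:ℝ) F, L y = R y → y = x := by
    intro y hy hyeq
    by_contra hne
    rcases lt_or_gt_of_ne hne with h | h
    · have h1 := hLanti y hy x hxIoo h
      have h2 := hRmono y hy x hxIoo h
      linarith
    · have h1 := hLanti x hxIoo y hy h
      have h2 := hRmono x hxIoo y hy h
      linarith
  -- derivative of f
  have hfderiv : ∀ z ∈ Set.Ioo (0:ℝ) F,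
      HasDerivAt (fun x => ((2:ℝ) ^ (B₁ / x) - 1) ^ δ + ((2:ℝ) ^ (B₂ / (F - x)) - 1) ^ δ)
        (δ * Real.log 2 * (R z - L z)) z := by
    intro z hz
    have hz0 : z ≠ 0 := hz.1.ne'
    have hFz : (0:ℝ) < F - z := sub_pos.mpr hz.2
    have hu1 : HasDerivAt (fun x : ℝ => B₁ / x) ((0 * z - B₁ * 1) / z ^ 2) z :=
      (hasDerivAt_const z B₁).div (hasDerivAt_id z) hz0
    have hv1 : HasDerivAt (fun x : ℝ => (2:ℝ) ^ (B₁ / x))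
        ((2:ℝ) ^ (B₁ / z) * Real.log 2 * ((0 * z - B₁ * 1) / z ^ 2)) z :=
      HasDerivAt.comp z (Real.hasStrictDerivAt_const_rpow two_pos (B₁ / z)).hasDerivAt hu1
    have hw1 : HasDerivAt (fun x : ℝ => ((2:ℝ) ^ (B₁ / x) - 1) ^ δ)
        (((2:ℝ) ^ (B₁ / z) * Real.log 2 * ((0 * z - B₁ * 1) / z ^ 2)) * δ *
          ((2:ℝ) ^ (B₁ / z) - 1) ^ (δ - 1)) z :=
      (hv1.sub_const 1).rpow_const (Or.inl (two_rpow_sub_one_pos (div_pos hB₁ hz.1)).ne')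
    have hu2 : HasDerivAt (fun x : ℝ => B₂ / (F - x))
        ((0 * (F - z) - B₂ * (0 - 1)) / (F - z) ^ 2) z :=
      (hasDerivAt_const z B₂).div ((hasDerivAt_const z F).sub (hasDerivAt_id z)) hFz.ne'
    have hv2 : HasDerivAt (fun x : ℝ => (2:ℝ) ^ (B₂ / (F - x)))
        ((2:ℝ) ^ (B₂ / (F - z)) * Real.log 2 * ((0 * (F - z) - B₂ * (0 - 1)) / (F - z) ^ 2)) z :=
      HasDerivAt.comp z (Real.hasStrictDerivAt_const_rpow two_pos (B₂ / (F - z))).hasDerivAt hu2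
    have hw2 : HasDerivAt (fun x : ℝ => ((2:ℝ) ^ (B₂ / (F - x)) - 1) ^ δ)
        (((2:ℝ) ^ (B₂ / (F - z)) * Real.log 2 * ((0 * (F - z) - B₂ * (0 - 1)) / (F - z) ^ 2)) * δ *
          ((2:ℝ) ^ (B₂ / (F - z)) - 1) ^ (δ - 1)) z :=
      (hv2.sub_const 1).rpow_const (Or.inl (two_rpow_sub_one_pos (div_pos hB₂ hFz)).ne')
    have hsum := hw1.add hw2
    refine hsum.congr_deriv ?_; symm
    simp only [hLdef, hRdef, Hfun]
    field_simp
    ring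
  -- minimality
  set fn : ℝ → ℝ := fun x => ((2:ℝ) ^ (B₁ / x) - 1) ^ δ + ((2:ℝ) ^ (B₂ / (F - x)) - 1) ^ δ
    with hfndef
  have hl2pos : (0:ℝ) < Real.log 2 := Real.log_pos one_lt_two
  have hanti : StrictAntiOn fn (Set.Ioc 0 x) := by
    apply strictAntiOn_of_deriv_neg (convex_Ioc 0 x)
    · intro z hz
      exact (hfderiv z ⟨hz.1, lt_of_le_of_lt hz.2 hxIoo.2⟩).continuousAt.continuousWithinAt
    · rw [interior_Ioc]
      intro z hz
      have hzI : z ∈ Set.Ioo (0:ℝ) F := ⟨hz.1, hz.2.trans hxIoo.2⟩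
      rw [(hfderiv z hzI).deriv]
      have h1 := hLanti z hzI x hxIoo hz.2
      have h2 := hRmono z hzI x hxIoo hz.2
      have : R z - L z < 0 := by linarith
      exact mul_neg_of_pos_of_neg (by positivity) this
  have hmono : StrictMonoOn fn (Set.Ico x F) := by
    apply strictMonoOn_of_deriv_pos (convex_Ico x F)
    · intro z hz
      exact (hfderiv z ⟨lt_of_lt_of_le hxIoo.1 hz.1, hz.2⟩).continuousAt.continuousWithinAt
    · rw [interior_Ico]
      intro z hz
      have hzI : z ∈ Set.Ioo (0:ℝ) F := ⟨hxIoo.1.trans hz.1, hz.2⟩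
      rw [(hfderiv z hzI).deriv]
      have h1 := hLanti x hxIoo z hzI hz.1
      have h2 := hRmono x hxIoo z hzI hz.1
      have : 0 < R z - L z := by linarith
      exact mul_pos (by positivity) this
  refine ⟨x, hxIoo, hxeq, huniq, ?_⟩
  intro y hy hne
  rcases lt_or_gt_of_ne hne with h | h
  · exact hanti ⟨hy.1, h.le⟩ ⟨hxIoo.1, le_refl x⟩ h
  · exact hmono ⟨le_refl x, hxIoo.2⟩ ⟨h.le, hy.2⟩ h


/-- Theorem 2 of the paper: there is a unique `x* ∈ (0, F)` solving the
first-order condition `(1/B₁) h(B₁/x*) = (1/B₂) h(B₂/(F−x*))` with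
`h(t) = t² 2^t (2^t − 1)^{δ−1}`, `δ = 2/α`, and this `x*` is the unique
global minimizer of
`f(x) = (2^{B₁/x} − 1)^δ + (2^{B₂/(F−x)} − 1)^δ` on `(0, F)`. -/
theorem optimal_bandwidth_allocation (α : ℝ) (hα : 2 < α) (B₁ B₂ F : ℝ)
    (hB₁ : 0 < B₁) (hB₂ : 0 < B₂) (hF : 0 < F) :
    ∃ x ∈ Set.Ioo (0 : ℝ) F,
      ((1 / B₁) *
          ((B₁ / x) ^ 2 * (2 : ℝ) ^ (B₁ / x) *
            ((2 : ℝ) ^ (B₁ / x) - 1) ^ (2 / α - 1)) =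
        (1 / B₂) *
          ((B₂ / (F - x)) ^ 2 * (2 : ℝ) ^ (B₂ / (F - x)) *
            ((2 : ℝ) ^ (B₂ / (F - x)) - 1) ^ (2 / α - 1))) ∧
      (∀ y ∈ Set.Ioo (0 : ℝ) F,
        ((1 / B₁) *
            ((B₁ / y) ^ 2 * (2 : ℝ) ^ (B₁ / y) *
              ((2 : ℝ) ^ (B₁ / y) - 1) ^ (2 / α - 1)) =
          (1 / B₂) *
            ((B₂ / (F - y)) ^ 2 * (2 : ℝ) ^ (B₂ / (F - y)) *
              ((2 : ℝ) ^ (B₂ / (F - y)) - 1) ^ (2 / α - 1))) → y = x) ∧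
      (∀ y ∈ Set.Ioo (0 : ℝ) F, y ≠ x →
        ((2 : ℝ) ^ (B₁ / x) - 1) ^ (2 / α) + ((2 : ℝ) ^ (B₂ / (F - x)) - 1) ^ (2 / α) <
          ((2 : ℝ) ^ (B₁ / y) - 1) ^ (2 / α) + ((2 : ℝ) ^ (B₂ / (F - y)) - 1) ^ (2 / α)) := by
  have hα0 : 0 < α := by linarith
  have hδ0 : 0 < 2 / α := by positivity
  have hδ1 : 2 / α < 1 := (div_lt_one hα0).mpr (by linarith)
  obtain ⟨x, hx, h1, h2, h3⟩ := main_aux (2 / α) B₁ B₂ F hδ0 hδ1 hB₁ hB₂ hF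
  exact ⟨x, hx, by simpa [Hfun] using h1,
    fun y hy hy' => h2 y hy (by simpa [Hfun] using hy'), h3⟩
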